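/- Let n ≥ 3, 0 < m ≤ (n-2)/n, α̃ > 0, β̃ ≠ 0 with α̃/β̃ ≤ (n-2)/m, and R₀ > 0. Let g ∈ C([0,R₀)) ∩ C²((0,R₀)) be a positive solution of (g^m)'' + ((n-1)/r)(g^m)' + r^{(n-2-nm)/m - 2}(α̃ g + β̃ r g') = 0 on (0,R₀) with g(0) = η > 0 and lim_{r→0⁺} r g'(r) = 0. Set k̃ = β̃/α̃. Then g(r) + k̃ r g'(r) > 0 and g'(r) < 0 for all r ∈ (0,R₀). -/

import Mathlib

open Set Filter

open Real in
set_option maxHeartbeats 1000000 in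
theorem stmt_7 (n : ℕ) (hn : 3 ≤ n) (m α' β' η R₀ : ℝ)
    (hm0 : 0 < m) (hm1 : m ≤ ((n : ℝ) - 2) / n)
    (hα' : 0 < α') (hβ' : β' ≠ 0) (hratio : α' / β' ≤ ((n : ℝ) - 2) / m)
    (hη : 0 < η) (hR₀ : 0 < R₀)
    (g : ℝ → ℝ)
    (hgc : ContinuousOn g (Ico 0 R₀))
    (hg2 : ContDiffOn ℝ 2 g (Ioo 0 R₀))
    (hgpos : ∀ r ∈ Ioo 0 R₀, 0 < g r)
    (hg0 : g 0 = η)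
    (hlim : Tendsto (fun r => r * deriv g r) (nhdsWithin 0 (Ioi 0)) (nhds 0))
    (hode : ∀ r ∈ Ioo 0 R₀,
      deriv (deriv (fun s => g s ^ m)) r + (((n : ℝ) - 1) / r) * deriv (fun s => g s ^ m) r
        + r ^ (((n : ℝ) - 2 - n * m) / m - 2) * (α' * g r + β' * r * deriv g r) = 0) :
    ∀ r ∈ Ioo 0 R₀, 0 < g r + (β' / α') * r * deriv g r ∧ deriv g r < 0 := by
  have hn3 : (3:ℝ) ≤ (n:ℝ) := by exact_mod_cast hn
  set I : Set ℝ := Ioo 0 R₀ with hIdef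
  have hI : IsOpen I := isOpen_Ioo
  set w : ℝ → ℝ := fun s => g s ^ m with hwdef
  have hgd : ∀ r ∈ I, HasDerivAt g (deriv g r) r := fun r hr =>
    ((hg2.differentiableOn (by norm_num)).differentiableAt (hI.mem_nhds hr)).hasDerivAt
  have hw2 : ContDiffOn ℝ 2 w I := hg2.rpow_const_of_ne (fun x hx => ne_of_gt (hgpos x hx))
  have hwd : ∀ r ∈ I, HasDerivAt w (m * g r ^ (m - 1) * deriv g r) r := by
    intro r hr
    exact (Real.hasDerivAt_rpow_const (p := m) (Or.inl (ne_of_gt (hgpos r hr)))).comp r (hgd r hr)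
  have hw' : ∀ r ∈ I, deriv w r = m * g r ^ (m - 1) * deriv g r := fun r hr => (hwd r hr).deriv
  have hw'c1 : ContDiffOn ℝ 1 (deriv w) I := hw2.deriv_of_isOpen hI (by norm_num)
  have hw'd : ∀ r ∈ I, HasDerivAt (deriv w) (deriv (deriv w) r) r := fun r hr =>
    ((hw'c1.differentiableOn (by norm_num)).differentiableAt (hI.mem_nhds hr)).hasDerivAt
  have hg'c : ContinuousOn (deriv g) I := hg2.continuousOn_deriv_of_isOpen hI (by norm_num)
  -- chunk 2
  set hf : ℝ → ℝ := fun r => α' * g r + β' * r * deriv g r with hfdef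
  set E : ℝ := ((n : ℝ) - 2 - n * m) / m - 2 with hEdef
  set D : ℝ := ((n : ℝ) - 2) / m - 3 with hDdef
  have hDE : ((n:ℝ) - 1) + E = D := by
    field_simp [hEdef, hDdef]
    rw [hEdef, hDdef]; field_simp; ring
  set P : ℝ → ℝ := fun r => r ^ ((n:ℝ) - 1) * deriv w r with hPdef
  -- derivative of P
  have hPd : ∀ r ∈ I, HasDerivAt P (-(r ^ D * hf r)) r := by
    intro r hr
    have h1 : HasDerivAt (fun t : ℝ => t ^ ((n:ℝ) - 1)) (((n:ℝ)-1) * r ^ ((n:ℝ) - 1 - 1)) r :=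
      Real.hasDerivAt_rpow_const (Or.inl (ne_of_gt hr.1))
    have h2 : HasDerivAt (fun t : ℝ => t ^ ((n:ℝ) - 1) * deriv w t) _ r := h1.mul (hw'd r hr)
    convert h2 using 1
    have hode' := hode r hr
    have hww : deriv (deriv w) r = -((((n : ℝ) - 1) / r) * deriv w r + r ^ E * hf r) := by
      rw [hwdef]; rw [hEdef, hfdef]; linarith [hode']
    rw [hww]
    have hr0 : (0:ℝ) < r := hr.1
    have e1 : r ^ ((n:ℝ) - 1) = r ^ ((n:ℝ) - 1 - 1) * r := by
      rw [← Real.rpow_add_one (ne_of_gt hr0)]; ring_nf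
    have e2 : r ^ ((n:ℝ) - 1) * r ^ E = r ^ D := by
      rw [← Real.rpow_add hr0, hDE]
    have e3 : r ^ ((n:ℝ)-1) * ((((n:ℝ)-1)/r) * deriv w r) = ((n:ℝ)-1) * r ^ ((n:ℝ)-1-1) * deriv w r := by
      rw [e1]; field_simp
    linear_combination e3 + hf r * e2
  -- limit of g at 0+
  have hsubI : Ioo (0:ℝ) R₀ ⊆ Ico 0 R₀ := Ioo_subset_Ico_self
  have tg : Tendsto g (nhdsWithin 0 (Ioi 0)) (nhds η) := by
    have h0 : (0:ℝ) ∈ Ico 0 R₀ := ⟨le_refl 0, hR₀⟩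
    have := (hgc 0 h0).tendsto
    rw [hg0] at this
    exact this.mono_left (le_trans (nhdsWithin_le_of_mem (Ioo_mem_nhdsGT hR₀)) (nhdsWithin_mono 0 hsubI))
  have tgm : Tendsto (fun r => g r ^ (m - 1)) (nhdsWithin 0 (Ioi 0)) (nhds (η ^ (m - 1))) :=
    ((Real.continuousAt_rpow_const η (m-1) (Or.inl (ne_of_gt hη))).tendsto).comp tg
  have trn : Tendsto (fun r : ℝ => r ^ ((n:ℝ) - 2)) (nhdsWithin 0 (Ioi 0)) (nhds 0) := by
    have h1 : ContinuousAt (fun r : ℝ => r ^ ((n:ℝ) - 2)) 0 :=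
      Real.continuousAt_rpow_const 0 _ (Or.inr (by linarith))
    have := h1.tendsto.mono_left (nhdsWithin_le_nhds (s := Ioi (0:ℝ)))
    rwa [Real.zero_rpow (by linarith : (n:ℝ) - 2 ≠ 0)] at this
  have hPlim : Tendsto P (nhdsWithin 0 (Ioi 0)) (nhds 0) := by
    have heq : ∀ᶠ r in nhdsWithin 0 (Ioi 0), m * g r ^ (m-1) * r ^ ((n:ℝ)-2) * (r * deriv g r) = P r := by
      filter_upwards [Ioo_mem_nhdsGT hR₀] with r hr
      have e1 : r ^ ((n:ℝ) - 1) = r ^ ((n:ℝ) - 2) * r := by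
        rw [← Real.rpow_add_one (ne_of_gt hr.1)]; ring_nf
      rw [hPdef]
      simp only [hw' r hr, e1]
      ring
    have base : Tendsto (fun r => m * g r ^ (m-1) * r ^ ((n:ℝ)-2) * (r * deriv g r))
        (nhdsWithin 0 (Ioi 0)) (nhds (m * η ^ (m-1) * 0 * 0)) :=
      (((tendsto_const_nhds (x := m)).mul tgm).mul trn).mul hlim
    rw [show m * η ^ (m-1) * 0 * 0 = 0 by ring] at base
    exact Tendsto.congr' heq base
  -- continuity
  have hfc : ContinuousOn hf I := by
    rw [hfdef]
    exact (continuousOn_const.mul hg2.continuousOn).add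
      ((continuousOn_const.mul (continuous_id.continuousOn)).mul hg'c)
  have hPc : ContinuousOn P I := by
    rw [hPdef]
    exact (ContinuousOn.rpow_const (continuous_id.continuousOn)
      (fun x hx => Or.inl (ne_of_gt hx.1))).mul hw'c1.continuousOn
  -- antitone lemma
  have hmono : ∀ a r, a ∈ I → r ∈ I → a < r → (∀ s ∈ Ioo (0:ℝ) r, 0 ≤ hf s) → P r ≤ P a := by
    intro a r ha hr har hnn
    have hsub : Icc a r ⊆ I := Icc_subset_Ioo ha.1 hr.2
    have hanti : AntitoneOn P (Icc a r) := by
      apply antitoneOn_of_deriv_nonpos (convex_Icc a r) (hPc.mono hsub)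
      · intro x hx
        rw [interior_Icc] at hx
        exact ((hPd x (hsub (Ioo_subset_Icc_self hx))).differentiableAt).differentiableWithinAt
      · intro x hx
        rw [interior_Icc] at hx
        rw [(hPd x (hsub (Ioo_subset_Icc_self hx))).deriv]
        have h1 : (0:ℝ) ≤ x ^ D := Real.rpow_nonneg (le_of_lt (lt_trans ha.1 hx.1)) _
        have h2 : 0 ≤ hf x := hnn x ⟨lt_trans ha.1 hx.1, hx.2⟩
        nlinarith
    exact hanti ⟨le_refl a, le_of_lt har⟩ ⟨le_of_lt har, le_refl r⟩ (le_of_lt har)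
  have hstrict : ∀ a r, a ∈ I → r ∈ I → a < r → (∀ s ∈ Ioo (0:ℝ) r, 0 < hf s) → P r < P a := by
    intro a r ha hr har hpos
    have hsub : Icc a r ⊆ I := Icc_subset_Ioo ha.1 hr.2
    have hanti : StrictAntiOn P (Icc a r) := by
      apply strictAntiOn_of_deriv_neg (convex_Icc a r) (hPc.mono hsub)
      intro x hx
      rw [interior_Icc] at hx
      rw [(hPd x (hsub (Ioo_subset_Icc_self hx))).deriv]
      have h1 : (0:ℝ) < x ^ D := Real.rpow_pos_of_pos (lt_trans ha.1 hx.1) _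
      have h2 : 0 < hf x := hpos x ⟨lt_trans ha.1 hx.1, hx.2⟩
      nlinarith
    exact hanti ⟨le_refl a, le_of_lt har⟩ ⟨le_of_lt har, le_refl r⟩ har
  have hPle : ∀ r ∈ I, (∀ s ∈ Ioo (0:ℝ) r, 0 ≤ hf s) → P r ≤ 0 := by
    intro r hr hnn
    have ev : ∀ᶠ a in nhdsWithin 0 (Ioi 0), P r ≤ P a := by
      filter_upwards [Ioo_mem_nhdsGT hr.1] with a ha
      exact hmono a r ⟨ha.1, lt_trans ha.2 hr.2⟩ hr ha.2 hnn
    exact ge_of_tendsto hPlim ev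
  have hPneg : ∀ r ∈ I, (∀ s ∈ Ioo (0:ℝ) r, 0 < hf s) → P r < 0 := by
    intro r hr hpos
    have ha2 : r/2 ∈ I := ⟨half_pos hr.1, lt_trans (half_lt_self hr.1) hr.2⟩
    have h1 : P (r/2) ≤ 0 := hPle (r/2) ha2
      (fun s hs => le_of_lt (hpos s ⟨hs.1, lt_trans hs.2 (half_lt_self hr.1)⟩))
    have h2 : P r < P (r/2) := hstrict (r/2) r ha2 hr (half_lt_self hr.1) hpos
    linarith
  have hg'neg : ∀ r ∈ I, P r < 0 → deriv g r < 0 := by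
    intro r hr hP
    have h1 : (0:ℝ) < r ^ ((n:ℝ)-1) := Real.rpow_pos_of_pos hr.1 _
    have h2 : deriv w r < 0 := by
      by_contra hcon
      push_neg at hcon
      have hPr : P r = r ^ ((n:ℝ)-1) * deriv w r := rfl
      have : 0 ≤ P r := by rw [hPr]; exact mul_nonneg (le_of_lt h1) hcon
      linarith
    rw [hw' r hr] at h2
    have h3 : (0:ℝ) < g r ^ (m-1) := Real.rpow_pos_of_pos (hgpos r hr) _
    nlinarith [mul_pos hm0 h3]
  -- limit of hf at 0+
  have hflim : Tendsto hf (nhdsWithin 0 (Ioi 0)) (nhds (α' * η)) := by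
    have base : Tendsto (fun r => α' * g r + β' * (r * deriv g r))
        (nhdsWithin 0 (Ioi 0)) (nhds (α' * η + β' * 0)) :=
      ((tendsto_const_nhds (x := α')).mul tg).add ((tendsto_const_nhds (x := β')).mul hlim)
    rw [show α' * η + β' * 0 = α' * η by ring] at base
    exact base.congr (fun r => by rw [hfdef]; ring)
  -- main claim : hf > 0 on I
  have hfpos : ∀ r ∈ I, 0 < hf r := by
    by_contra hcon
    push_neg at hcon
    obtain ⟨x, hx, hxle⟩ := hcon
    have ev : ∀ᶠ r in nhdsWithin 0 (Ioi 0), 0 < hf r :=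
      hflim.eventually (eventually_gt_nhds (by positivity))
    obtain ⟨δ, hδmem, hδ⟩ := mem_nhdsGT_iff_exists_Ioo_subset.1 ev
    have hδpos : (0:ℝ) < δ := hδmem
    set S : Set ℝ := {r | r ∈ I ∧ hf r ≤ 0} with hSdef
    have hne : S.Nonempty := ⟨x, hx, hxle⟩
    have hbdd : BddBelow S := ⟨0, fun s hs => le_of_lt hs.1.1⟩
    set r₁ : ℝ := sInf S with hr₁def
    have hr₁_le : r₁ ≤ x := csInf_le hbdd ⟨hx, hxle⟩
    have hr₁_ge : δ ≤ r₁ := by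
      apply le_csInf hne
      intro s hs
      by_contra hlt
      push_neg at hlt
      exact absurd (hδ ⟨hs.1.1, hlt⟩) (not_lt.2 hs.2)
    have hr₁I : r₁ ∈ I := ⟨lt_of_lt_of_le hδpos hr₁_ge, lt_of_le_of_lt hr₁_le hx.2⟩
    have hpos_lt : ∀ s ∈ Ioo (0:ℝ) r₁, 0 < hf s := by
      intro s hs
      by_contra hsle
      push_neg at hsle
      have hsI : s ∈ I := ⟨hs.1, lt_trans hs.2 hr₁I.2⟩
      exact absurd (csInf_le hbdd ⟨hsI, hsle⟩) (not_le.2 hs.2)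
    have hfr₁_le : hf r₁ ≤ 0 := by
      by_contra hgt
      push_neg at hgt
      have hca : ContinuousAt hf r₁ := hfc.continuousAt (hI.mem_nhds hr₁I)
      have ev2 : ∀ᶠ y in nhds r₁, 0 < hf y := hca.eventually (eventually_gt_nhds hgt)
      obtain ⟨ε, hεpos, hεball⟩ := Metric.eventually_nhds_iff.1 ev2
      obtain ⟨s, hsS, hslt⟩ := exists_lt_of_csInf_lt hne (by linarith : r₁ < r₁ + ε)
      have hs_ge : r₁ ≤ s := csInf_le hbdd hsS
      have : 0 < hf s := hεball (by rw [Real.dist_eq]; rw [abs_of_nonneg (by linarith)]; linarith)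
      exact absurd this (not_lt.2 hsS.2)
    have hfr₁_ge : 0 ≤ hf r₁ := by
      have hca : ContinuousAt hf r₁ := hfc.continuousAt (hI.mem_nhds hr₁I)
      have t1 : Tendsto hf (nhdsWithin r₁ (Iio r₁)) (nhds (hf r₁)) :=
        hca.tendsto.mono_left nhdsWithin_le_nhds
      apply ge_of_tendsto t1
      filter_upwards [Ioo_mem_nhdsLT hr₁I.1] with s hs
      exact le_of_lt (hpos_lt s hs)
    have hfr₁0 : hf r₁ = 0 := le_antisymm hfr₁_le hfr₁_ge
    have hPr₁ : P r₁ < 0 := hPneg r₁ hr₁I hpos_lt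
    have hg'r₁ : deriv g r₁ < 0 := hg'neg r₁ hr₁I hPr₁
    have hfr₁' : α' * g r₁ + β' * r₁ * deriv g r₁ = 0 := hfr₁0
    rcases lt_or_gt_of_ne hβ' with hβneg | hβpos
    · -- β' < 0 : contradiction
      have h1 : 0 < α' * g r₁ := mul_pos hα' (hgpos r₁ hr₁I)
      have h2 : 0 < β' * deriv g r₁ := mul_pos_of_neg_of_neg hβneg hg'r₁
      nlinarith [mul_pos h2 hr₁I.1]
    · -- β' > 0 : the hard case
      have hk : 0 < α' / β' := div_pos hα' hβpos
      set c : ℝ := (α' / β') * m with hcdef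
      have hc : 0 < c := mul_pos hk hm0
      have hcle : c ≤ (n:ℝ) - 2 := by
        have h1 : (α'/β') * m ≤ (((n:ℝ)-2)/m) * m := mul_le_mul_of_nonneg_right hratio (le_of_lt hm0)
        rwa [div_mul_cancel₀ _ (ne_of_gt hm0)] at h1
      set u₁ : ℝ → ℝ := fun r => c * r ^ (c-1) * w r + r ^ c * deriv w r with hu₁def
      set u₂ : ℝ → ℝ := fun r => c*(c-1) * r^(c-2) * w r + 2*c*(r^(c-1)) * deriv w r
        + r^c * deriv (deriv w) r with hu₂def
      set A : ℝ → ℝ := fun r => (2*c-(n:ℝ)+1)/r - β'/m * r^(E+1) * g r^(1-m) with hAdef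
      have hu₁d : ∀ r ∈ I, HasDerivAt u₁ (u₂ r) r := by
        intro r hr
        have hr0 : (0:ℝ) < r := hr.1
        have d1 : HasDerivAt (fun t : ℝ => c * t ^ (c-1)) (c * ((c-1) * r ^ (c-1-1))) r :=
          (Real.hasDerivAt_rpow_const (Or.inl (ne_of_gt hr0))).const_mul c
        have d2 : HasDerivAt (fun t : ℝ => t ^ c) (c * r ^ (c-1)) r :=
          Real.hasDerivAt_rpow_const (Or.inl (ne_of_gt hr0))
        have hwdr : HasDerivAt w (deriv w r) r := by rw [hw' r hr]; exact hwd r hr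
        have h12 : HasDerivAt (fun t : ℝ => c * t ^ (c-1) * w t + t ^ c * deriv w t) _ r := (d1.mul hwdr).add (d2.mul (hw'd r hr))
        have eexp : c - 1 - 1 = c - 2 := by ring
        rw [eexp] at h12
        convert h12 using 1
        show c*(c-1) * r^(c-2) * w r + 2*c*(r^(c-1)) * deriv w r + r^c * deriv (deriv w) r = _
        ring
      have hu₁h : ∀ r ∈ I, u₁ r = (m/β') * (r ^ (c-1) * (g r ^ (m-1) * hf r)) := by
        intro r hr
        have hr0 : (0:ℝ) < r := hr.1
        have e1 : r ^ c = r ^ (c-1) * r := by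
          rw [← Real.rpow_add_one (ne_of_gt hr0)]; ring_nf
        have e2 : g r ^ m = g r ^ (m-1) * g r := by
          rw [← Real.rpow_add_one (ne_of_gt (hgpos r hr))]; ring_nf
        have hstep : u₁ r = c * r^(c-1) * (g r ^ m) + r^c * (m * g r ^ (m-1) * deriv g r) := by
          show c * r ^ (c-1) * w r + r ^ c * deriv w r = _
          rw [hw' r hr]
        rw [hstep, e1, e2]
        show _ = (m/β') * (r ^ (c-1) * (g r ^ (m-1) * (α' * g r + β' * r * deriv g r)))
        rw [hcdef]
        field_simp
      have hu₁pos : ∀ s ∈ Ioo (0:ℝ) r₁, 0 < u₁ s := by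
        intro s hs
        have hsI : s ∈ I := ⟨hs.1, lt_trans hs.2 hr₁I.2⟩
        rw [hu₁h s hsI]
        have := hpos_lt s hs
        have h1 : (0:ℝ) < s ^ (c-1) := Real.rpow_pos_of_pos hs.1 _
        have h2 : (0:ℝ) < g s ^ (m-1) := Real.rpow_pos_of_pos (hgpos s hsI) _
        have h3 : (0:ℝ) < m / β' := div_pos hm0 hβpos
        positivity
      have hu₁r₁ : u₁ r₁ = 0 := by rw [hu₁h r₁ hr₁I, hfr₁0]; ring
      -- ODE identity for u₂
      have hu₂eq : ∀ r ∈ I, u₂ r = c*((n:ℝ)-2-c) * r^(c-2) * w r + A r * u₁ r := by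
        intro r hr
        have hr0 : (0:ℝ) < r := hr.1
        have hww : deriv (deriv w) r = -((((n:ℝ)-1)/r) * deriv w r + r ^ E * hf r) := by
          have hode' := hode r hr
          rw [hEdef, hfdef]; rw [hwdef] at hode' ⊢; linarith [hode']
        have e1 : r ^ c = r ^ (c-1) * r := by
          rw [← Real.rpow_add_one (ne_of_gt hr0)]; ring_nf
        have e2 : r ^ (c-1) = r ^ (c-2) * r := by
          rw [← Real.rpow_add_one (ne_of_gt hr0)]; ring_nf
        have e3 : r ^ (E+1) = r ^ E * r := by
          rw [← Real.rpow_add_one (ne_of_gt hr0)]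
        have e4 : g r ^ (1-m) = (g r ^ (m-1))⁻¹ := by
          rw [show (1-m : ℝ) = -(m-1) by ring, Real.rpow_neg (le_of_lt (hgpos r hr))]
        have e5 : (0:ℝ) < g r ^ (m-1) := Real.rpow_pos_of_pos (hgpos r hr) _
        show c*(c-1) * r^(c-2) * w r + 2*c*(r^(c-1)) * deriv w r + r^c * deriv (deriv w) r
          = c*((n:ℝ)-2-c) * r^(c-2) * w r
            + ((2*c-(n:ℝ)+1)/r - β'/m * r^(E+1) * g r^(1-m)) * u₁ r
        have hβ0 : β' ≠ 0 := ne_of_gt hβpos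
        have hm0' : m ≠ 0 := ne_of_gt hm0
        have hr0' : r ≠ 0 := ne_of_gt hr0
        have hG0 : g r ^ (m-1) ≠ 0 := ne_of_gt e5
        have t3 : r ^ c * ((((n:ℝ)-1)/r) * deriv w r) = ((n:ℝ)-1) * (r^(c-1) * deriv w r) := by
          rw [e1]; field_simp
        have t1 : ((2*c-(n:ℝ)+1)/r) * u₁ r
            = (2*c-(n:ℝ)+1) * (c * (r^(c-2) * w r) + r^(c-1) * deriv w r) := by
          show ((2*c-(n:ℝ)+1)/r) * (c * r ^ (c-1) * w r + r ^ c * deriv w r) = _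
          rw [e1, e2]; field_simp
        have t2 : (β'/m * r^(E+1) * g r^(1-m)) * u₁ r = r^c * (r^E * hf r) := by
          rw [hu₁h r hr, e3, e4, e1]; field_simp
        have tA : A r * u₁ r
            = ((2*c-(n:ℝ)+1)/r) * u₁ r - (β'/m * r^(E+1) * g r^(1-m)) * u₁ r := by
          show ((2*c-(n:ℝ)+1)/r - β'/m * r^(E+1) * g r^(1-m)) * u₁ r = _
          ring
        rw [hww, tA, t1, t2, mul_neg, mul_add, t3]
        ring
      -- u₂ r₁ ≤ 0 by the slope argument
      have hu₂le : u₂ r₁ ≤ 0 := by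
        by_contra hpos2
        push_neg at hpos2
        have hs := hasDerivAt_iff_tendsto_slope.1 (hu₁d r₁ hr₁I)
        have hs2 : Tendsto (slope u₁ r₁) (nhdsWithin r₁ (Iio r₁)) (nhds (u₂ r₁)) :=
          hs.mono_left (nhdsWithin_mono r₁ (fun y hy => ne_of_lt hy))
        have ev3 : ∀ᶠ y in nhdsWithin r₁ (Iio r₁), 0 < slope u₁ r₁ y :=
          hs2.eventually (eventually_gt_nhds hpos2)
        have ev4 : Ioo (0:ℝ) r₁ ∈ nhdsWithin r₁ (Iio r₁) := Ioo_mem_nhdsLT hr₁I.1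
        obtain ⟨y, hy1, hy2⟩ := (ev3.and (eventually_of_mem ev4 (fun y hy => hy))).exists
        rw [slope_def_field] at hy1
        have hnum : 0 < u₁ y := hu₁pos y hy2
        have hden : y - r₁ < 0 := by linarith [hy2.2]
        rw [hu₁r₁] at hy1
        have : (u₁ y - 0) / (y - r₁) < 0 := div_neg_of_pos_of_neg (by linarith) hden
        linarith
      rcases lt_or_eq_of_le hcle with hclt | hceq
      · -- strict case
        have h1 := hu₂eq r₁ hr₁I
        rw [hu₁r₁, mul_zero, add_zero] at h1
        have h2 : (0:ℝ) < r₁ ^ (c-2) := Real.rpow_pos_of_pos hr₁I.1 _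
        have h3 : (0:ℝ) < w r₁ := Real.rpow_pos_of_pos (hgpos r₁ hr₁I) m
        have h4 : (0:ℝ) < c * ((n:ℝ)-2-c) := mul_pos hc (by linarith)
        nlinarith [mul_pos (mul_pos h4 h2) h3]
      · -- equality case : Gronwall
        have hAc : ContinuousOn A I := by
          rw [hAdef]
          apply ContinuousOn.sub
          · exact continuousOn_const.div continuous_id.continuousOn (fun x hx => ne_of_gt hx.1)
          · exact (continuousOn_const.mul (ContinuousOn.rpow_const continuous_id.continuousOn
              (fun x hx => Or.inl (ne_of_gt hx.1)))).mul
              (hg2.continuousOn.rpow_const (fun x hx => Or.inl (ne_of_gt (hgpos x hx))))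
        set a : ℝ := r₁ / 2 with hadef
        have hapos : 0 < a := half_pos hr₁I.1
        have halt : a < r₁ := half_lt_self hr₁I.1
        have haI : a ∈ I := ⟨hapos, lt_trans halt hr₁I.2⟩
        have hsub : Icc a r₁ ⊆ I := Icc_subset_Ioo hapos hr₁I.2
        obtain ⟨C, hC⟩ := isCompact_Icc.exists_bound_of_continuousOn (hAc.mono hsub)
        set ψ : ℝ → ℝ := fun t => u₁ (a + r₁ - t) with hψdef
        have hψd : ∀ t ∈ Icc a r₁, HasDerivAt ψ (-(u₂ (a + r₁ - t))) t := by
          intro t ht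
          have hmem : a + r₁ - t ∈ Icc a r₁ := ⟨by linarith [ht.2], by linarith [ht.1]⟩
          have h1 := hu₁d _ (hsub hmem)
          have h2 : HasDerivAt (fun t : ℝ => a + r₁ - t) (-1) t :=
            (hasDerivAt_id t).const_sub (a+r₁)
          have h3 : HasDerivAt (fun t : ℝ => u₁ (a + r₁ - t)) _ t := h1.comp t h2
          convert h3 using 1
          ring
        have hu₂A : ∀ s ∈ Icc a r₁, u₂ s = A s * u₁ s := by
          intro s hsmem
          have := hu₂eq s (hsub hsmem)
          rw [show (n:ℝ)-2-c = 0 by rw [← hceq]; ring] at this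
          rw [this]; ring
        have key := norm_le_gronwallBound_of_norm_deriv_right_le
          (f := ψ) (f' := fun t => -(u₂ (a + r₁ - t))) (δ := 0) (K := C) (ε := 0) (a := a) (b := r₁)
          (fun t ht => (hψd t ht).continuousAt.continuousWithinAt)
          (fun t ht => (hψd t ⟨ht.1, le_of_lt ht.2⟩).hasDerivWithinAt)
          (by
            show ‖u₁ (a + r₁ - a)‖ ≤ 0
            rw [show a + r₁ - a = r₁ by ring, hu₁r₁]
            simp)
          (by
            intro t ht
            have hmem : a + r₁ - t ∈ Icc a r₁ := ⟨by linarith [ht.2], by linarith [ht.1]⟩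
            show ‖-(u₂ (a + r₁ - t))‖ ≤ C * ‖ψ t‖ + 0
            rw [hu₂A _ hmem]
            have hψt : ψ t = u₁ (a + r₁ - t) := rfl
            rw [norm_neg, norm_mul, hψt]
            have := hC _ hmem
            nlinarith [norm_nonneg (u₁ (a + r₁ - t)), mul_le_mul_of_nonneg_right this
              (norm_nonneg (u₁ (a + r₁ - t)))])
        have hfin := key r₁ ⟨le_of_lt halt, le_refl r₁⟩
        rw [gronwallBound_ε0] at hfin
        simp only [zero_mul] at hfin
        have hψr₁ : ψ r₁ = u₁ a := by rw [hψdef]; norm_num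
        rw [hψr₁] at hfin
        have : 0 < u₁ a := hu₁pos a ⟨hapos, halt⟩
        have habs : ‖u₁ a‖ = u₁ a := abs_of_pos this
        rw [habs] at hfin
        linarith
  -- conclusion
  intro r hr
  have hfr : 0 < hf r := hfpos r hr
  constructor
  · have hID : α' * (g r + (β' / α') * r * deriv g r) = hf r := by
      rw [hfdef]
      field_simp
    have h2 : 0 < α' * (g r + (β' / α') * r * deriv g r) := by rw [hID]; exact hfr
    exact (mul_pos_iff_of_pos_left hα').mp h2
  · refine hg'neg r hr (hPneg r hr ?_)
    intro s hs
    exact hfpos s ⟨hs.1, lt_trans hs.2 hr.2⟩
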